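/- Let $t\in(0,1)$ and $x^+\in\ell^1_{\bar r}$. If $\|x^+\|_{k_t}<\infty$ then the variational source condition $\|x^+-x\|_{\bar r,1}+\|x^+\|_{\bar r,1}-\|x\|_{\bar r,1} \le K\|x^+-x\|_{\bar a,2}^{(2-2t)/(2-t)}$ holds for all $x\in\ell^1_{\bar r}$ with constant $K=(2+4(2^{1-t}-1)^{-1})\|x^+\|_{k_t}^{t/(2-t)}$. -/

import Mathlib

open scoped ENNReal
noncomputable section

variable {Λ : Type*}

/-- Weighted `ℓ^p` quasi-norm (value in `ℝ≥0∞`). -/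
def wnorm (ω : Λ → ℝ) (p : ℝ) (x : Λ → ℝ) : ℝ≥0∞ :=
  (∑' j, ENNReal.ofReal (ω j ^ p * |x j| ^ p)) ^ (1 / p)

/-- The interpolating weights `(ω_t)_j = (a_j^{2t-2} r_j^{2-t})^{1/t}`. -/
def omegaWeight (a r : Λ → ℝ) (t : ℝ) : Λ → ℝ :=
  fun j => (a j ^ (2 * t - 2) * r j ^ (2 - t)) ^ (1 / t)

/-- Weighted `ℓ¹` norm `‖x‖_{r,1} = ∑ r_j |x_j|`. -/
def rnorm1 (r : Λ → ℝ) (x : Λ → ℝ) : ℝ≥0∞ := ∑' j, ENNReal.ofReal (r j * |x j|)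

/-- Weighted `ℓ²` norm `‖x‖_{a,2} = (∑ a_j² x_j²)^{1/2}`. -/
def anorm2 (a : Λ → ℝ) (x : Λ → ℝ) : ℝ≥0∞ :=
  (∑' j, ENNReal.ofReal (a j ^ 2 * x j ^ 2)) ^ ((1 : ℝ) / 2)

/-- The sum `∑_j a_j⁻² r_j² 𝟙_{a_j⁻² r_j α < |x_j|}`. -/
def kSum (a r : Λ → ℝ) (α : ℝ) (x : Λ → ℝ) : ℝ≥0∞ :=
  ∑' j, ENNReal.ofReal (if r j * α / a j ^ 2 < |x j| then r j ^ 2 / a j ^ 2 else 0)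

/-- The weak quasi-norm `‖x‖_{k_t} = sup_{α>0} α (kSum α x)^{1/t}`. -/
def knorm (a r : Λ → ℝ) (t : ℝ) (x : Λ → ℝ) : ℝ≥0∞ :=
  ⨆ α ∈ Set.Ioi (0 : ℝ), ENNReal.ofReal α * (kSum a r α x) ^ (1 / t)

/-- Hard thresholding operator. -/
def Tthresh (a r : Λ → ℝ) (α : ℝ) (x : Λ → ℝ) : Λ → ℝ :=
  fun j => if r j * α / a j ^ 2 < |x j| then x j else 0

open MeasureTheory in
private lemma tsum_cauchy_schwarz (F G : Λ → ℝ≥0∞) :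
    ∑' j, F j * G j ≤ (∑' j, F j ^ (2:ℝ)) ^ ((1:ℝ)/2) * (∑' j, G j ^ (2:ℝ)) ^ ((1:ℝ)/2) := by
  letI : MeasurableSpace Λ := ⊤
  rw [← lintegral_count, ← lintegral_count (fun j => F j ^ (2:ℝ)),
    ← lintegral_count (fun j => G j ^ (2:ℝ))]
  exact ENNReal.lintegral_mul_le_Lp_mul_Lq _ ⟨by norm_num, by norm_num, by norm_num⟩
    Measurable.of_discrete.aemeasurable Measurable.of_discrete.aemeasurable

private lemma log_eq_imp {u v : ℝ} (hu : 0 < u) (hv : 0 < v)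
    (h : Real.log u = Real.log v) : u = v :=
  Real.log_injOn_pos (Set.mem_Ioi.mpr hu) (Set.mem_Ioi.mpr hv) h

set_option maxHeartbeats 1000000 in
theorem stmt7 (a r : Λ → ℝ) (ha : ∀ j, 0 < a j) (hr : ∀ j, 0 < r j)
    (t : ℝ) (ht : t ∈ Set.Ioo (0:ℝ) 1)
    (xplus : Λ → ℝ) (hx1 : Summable fun j => r j * |xplus j|)
    (hk : knorm a r t xplus ≠ ⊤) :
    ∀ x : Λ → ℝ, Summable (fun j => r j * |x j|) →
      ENNReal.ofReal ((∑' j, r j * |xplus j - x j|) + (∑' j, r j * |xplus j|)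
          - ∑' j, r j * |x j|) ≤
        ENNReal.ofReal ((2 + 4 * (2 ^ (1 - t) - 1)⁻¹) *
            (knorm a r t xplus).toReal ^ (t / (2 - t))) *
          anorm2 a (xplus - x) ^ ((2 - 2 * t) / (2 - t)) := by
  obtain ⟨ht0, ht1⟩ := ht
  intro x hx
  set κ := knorm a r t xplus with hκdef
  -- Case κ = 0 : then xplus = 0 and LHS = 0
  by_cases hκ0 : κ = 0
  · have hxp : ∀ j, xplus j = 0 := by
      intro j
      by_contra hj
      have hab : 0 < |xplus j| := abs_pos.mpr hj
      set β := a j ^ 2 * |xplus j| / (2 * r j) with hβ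
      have hβpos : 0 < β := by have := ha j; have := hr j; positivity
      have h1 : ENNReal.ofReal β * (kSum a r β xplus) ^ (1/t) ≤ κ := by
        rw [hκdef]; unfold knorm
        exact le_biSup (fun β => ENNReal.ofReal β * kSum a r β xplus ^ (1/t))
          (Set.mem_Ioi.mpr hβpos)
      rw [hκ0, le_zero_iff, mul_eq_zero] at h1
      have h2 : kSum a r β xplus = 0 := by
        rcases h1 with h | h
        · exact absurd h (ENNReal.ofReal_pos.mpr hβpos).ne'
        · rcases (ENNReal.rpow_eq_zero_iff).mp h with ⟨h', _⟩ | ⟨_, h'⟩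
          · exact h'
          · exfalso; have : (0:ℝ) < 1/t := by positivity
            linarith
      have h3 := (ENNReal.tsum_eq_zero.mp h2) j
      rw [ENNReal.ofReal_eq_zero] at h3
      by_cases hc : r j * β / a j ^ 2 < |xplus j|
      · rw [if_pos hc] at h3
        have : 0 < r j ^ 2 / a j ^ 2 := by have := ha j; have := hr j; positivity
        linarith
      · push_neg at hc
        have heq : r j * β / a j ^ 2 = |xplus j| / 2 := by
          have h5 := (ha j).ne'
          have h6 := (hr j).ne'
          rw [hβ]; field_simp
        rw [heq] at hc
        linarith
    have e1 : (∑' j, r j * |xplus j - x j|) = ∑' j, r j * |x j| :=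
      tsum_congr fun j => by rw [hxp j, zero_sub, abs_neg]
    have e2 : (∑' j, r j * |xplus j|) = 0 := by
      have : ∀ j, r j * |xplus j| = 0 := fun j => by rw [hxp j, abs_zero, mul_zero]
      rw [tsum_congr this, tsum_zero]
    rw [e1, e2]
    simp only [add_zero, sub_self, ENNReal.ofReal_zero]
    exact zero_le
  -- now κ ≠ 0, κ ≠ ⊤
  have hκt : κ ≠ ⊤ := hk
  obtain ⟨κr, hκr'⟩ : ∃ y, y = κ.toReal := ⟨_, rfl⟩
  rw [show (knorm a r t xplus).toReal = κr by rw [hκr', hκdef]]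
  have hκr : 0 < κr := hκr' ▸ ENNReal.toReal_pos hκ0 hκt
  have h2t : (0:ℝ) < 2 - t := by linarith
  have h2t' : (2:ℝ) - t ≠ 0 := h2t.ne'
  -- kSum bound
  have hkS : ∀ β : ℝ, 0 < β → kSum a r β xplus ≤ ENNReal.ofReal ((κr / β) ^ t) := by
    intro β hβ
    have h1 : ENNReal.ofReal β * (kSum a r β xplus) ^ (1/t) ≤ κ := by
      rw [hκdef]; unfold knorm
      exact le_biSup (fun β => ENNReal.ofReal β * kSum a r β xplus ^ (1/t))
        (Set.mem_Ioi.mpr hβ)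
    have h2 : (kSum a r β xplus) ^ (1/t) ≤ κ / ENNReal.ofReal β := by
      rw [ENNReal.le_div_iff_mul_le (Or.inl (ENNReal.ofReal_pos.mpr hβ).ne')
        (Or.inl ENNReal.ofReal_ne_top), mul_comm]
      exact h1
    have h3 : kSum a r β xplus = ((kSum a r β xplus) ^ (1/t)) ^ t := by
      rw [← ENNReal.rpow_mul, one_div, inv_mul_cancel₀ ht0.ne', ENNReal.rpow_one]
    calc kSum a r β xplus = ((kSum a r β xplus) ^ (1/t)) ^ t := h3
      _ ≤ (κ / ENNReal.ofReal β) ^ t := ENNReal.rpow_le_rpow h2 ht0.le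
      _ = ENNReal.ofReal ((κr / β) ^ t) := by
          rw [← ENNReal.ofReal_toReal hκt, ← hκr', ← ENNReal.ofReal_div_of_pos hβ,
            ENNReal.ofReal_rpow_of_nonneg (by positivity) ht0.le]
  -- summability
  have hxd : Summable (fun j => r j * |xplus j - x j|) := by
    apply Summable.of_nonneg_of_le (fun j => by have := hr j; positivity)
      (fun j => ?_) (hx1.add hx)
    have h1 : |xplus j - x j| ≤ |xplus j| + |x j| := abs_sub _ _
    have := mul_le_mul_of_nonneg_left h1 (hr j).le
    nlinarith
  have hG : Summable (fun j => r j * |xplus j - x j| + r j * |xplus j| - r j * |x j|) :=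
    (hxd.add hx1).sub hx
  have hGnn : ∀ j, 0 ≤ r j * |xplus j - x j| + r j * |xplus j| - r j * |x j| := by
    intro j
    have h1 : |x j| ≤ |xplus j - x j| + |xplus j| := by
      have := abs_sub (xplus j - x j) (xplus j)
      simp only [sub_sub_cancel_left, abs_neg] at this
      linarith [this, abs_sub (xplus j) (x j)]
    nlinarith [(hr j).le]
  have hLHS : (∑' j, r j * |xplus j - x j|) + (∑' j, r j * |xplus j|)
      - ∑' j, r j * |x j| = ∑' j, (r j * |xplus j - x j| + r j * |xplus j| - r j * |x j|) := by
    rw [Summable.tsum_sub (hxd.add hx1) hx, Summable.tsum_add hxd hx1]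
  set D := anorm2 a (xplus - x) with hD
  have hDeq : D = (∑' j, ENNReal.ofReal (a j ^ 2 * (xplus j - x j) ^ 2)) ^ ((1:ℝ)/2) := by
    rw [hD, anorm2]
    simp only [Pi.sub_apply]
  -- case D = 0
  by_cases hD0 : D = 0
  · have hxx : ∀ j, xplus j = x j := by
      intro j
      rw [hDeq] at hD0
      rcases ENNReal.rpow_eq_zero_iff.mp hD0 with ⟨h', _⟩ | ⟨_, h'⟩
      · have h3 := (ENNReal.tsum_eq_zero.mp h') j
        rw [ENNReal.ofReal_eq_zero] at h3
        have h4 : 0 ≤ a j ^ 2 * (xplus j - x j) ^ 2 := by positivity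
        have h5 : a j ^ 2 * (xplus j - x j) ^ 2 = 0 := le_antisymm h3 h4
        have h6 : (xplus j - x j) ^ 2 = 0 := by
          rcases mul_eq_zero.mp h5 with h | h
          · exact absurd h (show (0:ℝ) < a j ^ 2 by have := ha j; positivity).ne'
          · exact h
        have := pow_eq_zero_iff (n := 2) (by norm_num) |>.mp h6
        linarith [this]
      · norm_num at h'
    have e1 : (∑' j, r j * |xplus j - x j|) = 0 := by
      have : ∀ j, r j * |xplus j - x j| = 0 := fun j => by
        rw [hxx j, sub_self, abs_zero, mul_zero]
      rw [tsum_congr this, tsum_zero]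
    have e2 : (∑' j, r j * |xplus j|) = ∑' j, r j * |x j| :=
      tsum_congr fun j => by rw [hxx j]
    rw [e1, e2]
    simp only [zero_add, sub_self, ENNReal.ofReal_zero]
    exact zero_le
  -- constant positivity
  have h2pow : (1:ℝ) < 2 ^ (1 - t) :=
    Real.one_lt_rpow_iff_of_pos (by norm_num) |>.mpr (Or.inl ⟨one_lt_two, by linarith⟩)
  have hKpos : 0 < (2 + 4 * ((2:ℝ) ^ (1 - t) - 1)⁻¹) * κr ^ (t / (2 - t)) := by
    have h1 : 0 < ((2:ℝ) ^ (1 - t) - 1)⁻¹ := inv_pos.mpr (by linarith)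
    exact mul_pos (by linarith) (Real.rpow_pos_of_pos hκr _)
  have hepos : 0 < (2 - 2 * t) / (2 - t) := by
    apply div_pos <;> linarith
  -- case D = ⊤
  by_cases hDt : D = ⊤
  · rw [hDt, ENNReal.top_rpow_of_pos hepos, ENNReal.mul_top
      (ENNReal.ofReal_pos.mpr hKpos).ne']
    exact le_top
  -- main case
  obtain ⟨δ, hδ'⟩ : ∃ y, y = D.toReal := ⟨_, rfl⟩
  have hδ : 0 < δ := hδ' ▸ ENNReal.toReal_pos hD0 hDt
  have hDδ : D = ENNReal.ofReal δ := by rw [hδ', ENNReal.ofReal_toReal hDt]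
  obtain ⟨α, hα⟩ : ∃ y, y = δ ^ (2/(2-t)) * κr ^ (-(t/(2-t))) := ⟨_, rfl⟩
  have hαpos : 0 < α := hα ▸ mul_pos (Real.rpow_pos_of_pos hδ _) (Real.rpow_pos_of_pos hκr _)
  -- pointwise split
  have hsplit : ∀ j, ENNReal.ofReal (r j * |xplus j - x j| + r j * |xplus j| - r j * |x j|)
      ≤ 2 * ENNReal.ofReal (if r j * α / a j ^ 2 < |xplus j| then r j * |xplus j - x j| else 0)
        + 2 * ENNReal.ofReal (if r j * α / a j ^ 2 < |xplus j| then 0 else r j * |xplus j|) := by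
    intro j
    have hre : r j * |xplus j - x j| + r j * |xplus j| - r j * |x j|
        ≤ 2 * (if r j * α / a j ^ 2 < |xplus j| then r j * |xplus j - x j| else 0)
          + 2 * (if r j * α / a j ^ 2 < |xplus j| then 0 else r j * |xplus j|) := by
      by_cases hc : r j * α / a j ^ 2 < |xplus j|
      · rw [if_pos hc, if_pos hc]
        have h1 : |xplus j| - |x j| ≤ |xplus j - x j| := abs_sub_abs_le_abs_sub _ _
        nlinarith [(hr j).le, mul_le_mul_of_nonneg_left h1 (hr j).le]
      · rw [if_neg hc, if_neg hc]
        have h1 : |xplus j - x j| ≤ |xplus j| + |x j| := abs_sub _ _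
        nlinarith [(hr j).le, mul_le_mul_of_nonneg_left h1 (hr j).le]
    calc ENNReal.ofReal (r j * |xplus j - x j| + r j * |xplus j| - r j * |x j|)
        ≤ ENNReal.ofReal (2 * (if r j * α / a j ^ 2 < |xplus j| then r j * |xplus j - x j| else 0)
          + 2 * (if r j * α / a j ^ 2 < |xplus j| then 0 else r j * |xplus j|)) :=
          ENNReal.ofReal_le_ofReal hre
      _ = _ := by
          have hA : 0 ≤ (if r j * α / a j ^ 2 < |xplus j| then r j * |xplus j - x j| else 0) := by
            split
            · have := hr j; positivity
            · exact le_refl 0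
          have hB : 0 ≤ (if r j * α / a j ^ 2 < |xplus j| then 0 else r j * |xplus j|) := by
            split
            · exact le_refl 0
            · have := hr j; positivity
          rw [ENNReal.ofReal_add (by positivity) (by positivity),
            ENNReal.ofReal_mul (by norm_num : (0:ℝ) ≤ 2),
            ENNReal.ofReal_mul (by norm_num : (0:ℝ) ≤ 2), ENNReal.ofReal_ofNat]
  -- T1 : Cauchy-Schwarz bound
  have hT1 : (∑' j, ENNReal.ofReal
        (if r j * α / a j ^ 2 < |xplus j| then r j * |xplus j - x j| else 0))
      ≤ ENNReal.ofReal ((κr / α) ^ (t/2)) * D := by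
    set F : Λ → ℝ≥0∞ := fun j =>
      (ENNReal.ofReal (if r j * α / a j ^ 2 < |xplus j| then r j ^ 2 / a j ^ 2 else 0))
        ^ ((1:ℝ)/2) with hF
    set G : Λ → ℝ≥0∞ := fun j =>
      (ENNReal.ofReal (a j ^ 2 * (xplus j - x j) ^ 2)) ^ ((1:ℝ)/2) with hGdef
    have hpt : ∀ j, ENNReal.ofReal
        (if r j * α / a j ^ 2 < |xplus j| then r j * |xplus j - x j| else 0) = F j * G j := by
      intro j
      simp only [hF, hGdef]
      by_cases hc : r j * α / a j ^ 2 < |xplus j|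
      · rw [if_pos hc, if_pos hc]
        rw [ENNReal.ofReal_rpow_of_nonneg (by have := ha j; have := hr j; positivity)
            (by norm_num : (0:ℝ) ≤ 1/2),
          ENNReal.ofReal_rpow_of_nonneg (by positivity) (by norm_num : (0:ℝ) ≤ 1/2),
          ← ENNReal.ofReal_mul (by positivity)]
        congr 1
        rw [← Real.mul_rpow (by have := ha j; have := hr j; positivity) (by positivity)]
        have he : r j ^ 2 / a j ^ 2 * (a j ^ 2 * (xplus j - x j) ^ 2)
            = (r j * |xplus j - x j|) ^ 2 := by
          have h5 := (ha j).ne'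
          rw [mul_pow, sq_abs]
          field_simp
        rw [he, ← Real.sqrt_eq_rpow, Real.sqrt_sq (by have := hr j; positivity)]
      · rw [if_neg hc, if_neg hc]
        rw [ENNReal.ofReal_zero, ENNReal.zero_rpow_of_pos (by norm_num), zero_mul]
    have hF2 : (∑' j, F j ^ (2:ℝ)) = kSum a r α xplus := by
      refine tsum_congr fun j => ?_
      rw [hF, ← ENNReal.rpow_mul]
      norm_num
    have hG2 : (∑' j, G j ^ (2:ℝ)) ^ ((1:ℝ)/2) = D := by
      rw [hDeq]
      congr 1
      refine tsum_congr fun j => ?_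
      rw [hGdef, ← ENNReal.rpow_mul]
      norm_num
    calc (∑' j, ENNReal.ofReal
          (if r j * α / a j ^ 2 < |xplus j| then r j * |xplus j - x j| else 0))
        = ∑' j, F j * G j := tsum_congr hpt
      _ ≤ (∑' j, F j ^ (2:ℝ)) ^ ((1:ℝ)/2) * (∑' j, G j ^ (2:ℝ)) ^ ((1:ℝ)/2) :=
          tsum_cauchy_schwarz F G
      _ ≤ (ENNReal.ofReal ((κr / α) ^ t)) ^ ((1:ℝ)/2) * D := by
          rw [hG2, hF2]
          exact mul_le_mul_left (ENNReal.rpow_le_rpow (hkS α hαpos) (by norm_num)) D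
      _ = ENNReal.ofReal ((κr / α) ^ (t/2)) * D := by
          rw [ENNReal.ofReal_rpow_of_nonneg (by positivity) (by norm_num : (0:ℝ) ≤ 1/2),
            ← Real.rpow_mul (by positivity), mul_one_div]
  -- T2 : dyadic tail bound
  have hq1 : (2:ℝ) ^ (t - 1) < 1 :=
    Real.rpow_lt_one_of_one_lt_of_neg one_lt_two (by linarith)
  have hq0 : (0:ℝ) < 2 ^ (t - 1) := Real.rpow_pos_of_pos (by norm_num) _
  have hT2 : (∑' j, ENNReal.ofReal
        (if r j * α / a j ^ 2 < |xplus j| then 0 else r j * |xplus j|))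
      ≤ ENNReal.ofReal (2 * ((2:ℝ) ^ (1 - t) - 1)⁻¹ * (α ^ (1 - t) * κr ^ t)) := by
    have hpt : ∀ j, ENNReal.ofReal
        (if r j * α / a j ^ 2 < |xplus j| then 0 else r j * |xplus j|)
        ≤ ∑' k : ℕ, ENNReal.ofReal (α * (2⁻¹:ℝ) ^ k) * ENNReal.ofReal
            (if r j * (α * (2⁻¹:ℝ) ^ (k+1)) / a j ^ 2 < |xplus j|
              then r j ^ 2 / a j ^ 2 else 0) := by
      intro j
      by_cases hc : r j * α / a j ^ 2 < |xplus j|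
      · rw [if_pos hc, ENNReal.ofReal_zero]; exact zero_le
      · rw [if_neg hc]
        push_neg at hc
        by_cases hz : xplus j = 0
        · rw [hz, abs_zero, mul_zero, ENNReal.ofReal_zero]; exact zero_le
        have habs : 0 < |xplus j| := abs_pos.mpr hz
        have haj := ha j
        have hrj := hr j
        set c : ℝ := r j * α / (a j ^ 2 * |xplus j|) with hcdef
        have hc1 : 1 ≤ c := by
          rw [hcdef, le_div_iff₀ (by positivity)]
          rw [le_div_iff₀ (by positivity : (0:ℝ) < a j ^ 2)] at hc
          linarith
        set k := Nat.log 2 ⌊c⌋₊ with hkk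
        have hfl1 : 1 ≤ ⌊c⌋₊ := Nat.le_floor (by exact_mod_cast hc1)
        have h2k : (2:ℝ) ^ k ≤ c := by
          have h := Nat.pow_log_le_self 2 (Nat.one_le_iff_ne_zero.mp hfl1)
          calc (2:ℝ) ^ k = ((2 ^ k : ℕ) : ℝ) := by push_cast; ring
            _ ≤ (⌊c⌋₊ : ℝ) := by exact_mod_cast h
            _ ≤ c := Nat.floor_le (by linarith)
        have h2k' : c < 2 ^ (k+1) := by
          have h := Nat.lt_pow_succ_log_self (by norm_num : 1 < 2) ⌊c⌋₊
          calc c < ⌊c⌋₊ + 1 := Nat.lt_floor_add_one c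
            _ ≤ ((2 ^ (k+1) : ℕ) : ℝ) := by exact_mod_cast h
            _ = 2 ^ (k+1) := by push_cast; ring
        have hmem : r j * (α * (2⁻¹:ℝ) ^ (k+1)) / a j ^ 2 < |xplus j| := by
          have key := (div_lt_iff₀ (by positivity : (0:ℝ) < a j ^ 2 * |xplus j|)).mp h2k'
          have he : r j * (α * ((2:ℝ)⁻¹) ^ (k+1)) / a j ^ 2
              = (r j * α) / (2 ^ (k+1) * a j ^ 2) := by
            rw [inv_pow]
            field_simp
          rw [he, div_lt_iff₀ (by positivity)]
          nlinarith [key, pow_pos (by norm_num : (0:ℝ) < 2) (k+1)]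
        have hbd : r j * |xplus j| ≤ α * (2⁻¹:ℝ) ^ k * (r j ^ 2 / a j ^ 2) := by
          have key := (le_div_iff₀ (by positivity : (0:ℝ) < a j ^ 2 * |xplus j|)).mp h2k
          have he : α * ((2:ℝ)⁻¹) ^ k * (r j ^ 2 / a j ^ 2)
              = (α * r j ^ 2) / (2 ^ k * a j ^ 2) := by
            rw [inv_pow]
            field_simp
          rw [he, le_div_iff₀ (by positivity)]
          nlinarith [mul_le_mul_of_nonneg_left key hrj.le]
        refine le_trans ?_ (ENNReal.le_tsum k)
        show ENNReal.ofReal (r j * |xplus j|) ≤ ENNReal.ofReal (α * (2⁻¹:ℝ) ^ k)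
          * ENNReal.ofReal (if r j * (α * (2⁻¹:ℝ) ^ (k+1)) / a j ^ 2 < |xplus j|
              then r j ^ 2 / a j ^ 2 else 0)
        rw [if_pos hmem, ← ENNReal.ofReal_mul (by positivity)]
        exact ENNReal.ofReal_le_ofReal hbd
    calc (∑' j, ENNReal.ofReal
          (if r j * α / a j ^ 2 < |xplus j| then 0 else r j * |xplus j|))
        ≤ ∑' j, ∑' k : ℕ, ENNReal.ofReal (α * (2⁻¹:ℝ) ^ k) * ENNReal.ofReal
            (if r j * (α * (2⁻¹:ℝ) ^ (k+1)) / a j ^ 2 < |xplus j|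
              then r j ^ 2 / a j ^ 2 else 0) := ENNReal.tsum_le_tsum hpt
      _ = ∑' k : ℕ, ∑' j, ENNReal.ofReal (α * (2⁻¹:ℝ) ^ k) * ENNReal.ofReal
            (if r j * (α * (2⁻¹:ℝ) ^ (k+1)) / a j ^ 2 < |xplus j|
              then r j ^ 2 / a j ^ 2 else 0) := ENNReal.tsum_comm
      _ = ∑' k : ℕ, ENNReal.ofReal (α * (2⁻¹:ℝ) ^ k)
            * kSum a r (α * (2⁻¹:ℝ) ^ (k+1)) xplus := by
          refine tsum_congr fun k => ?_
          rw [ENNReal.tsum_mul_left, kSum]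
      _ ≤ ∑' k : ℕ, ENNReal.ofReal (α * (2⁻¹:ℝ) ^ k)
            * ENNReal.ofReal ((κr / (α * (2⁻¹:ℝ) ^ (k+1))) ^ t) := by
          refine ENNReal.tsum_le_tsum fun k => ?_
          exact mul_le_mul_right (hkS _ (by positivity)) _
      _ = ∑' k : ℕ, ENNReal.ofReal (α ^ (1-t) * κr ^ t * 2 ^ t)
            * (ENNReal.ofReal ((2:ℝ) ^ (t-1))) ^ k := by
          refine tsum_congr fun k => ?_
          rw [← ENNReal.ofReal_pow hq0.le, ← ENNReal.ofReal_mul (by positivity),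
            ← ENNReal.ofReal_mul (by positivity)]
          congr 1
          have hik : (0:ℝ) < (2⁻¹:ℝ) ^ (k+1) := by positivity
          rw [Real.div_rpow hκr.le (by positivity)]
          rw [Real.mul_rpow hαpos.le hik.le]
          have h1 : ((2⁻¹:ℝ) ^ (k+1)) ^ t = 2 ^ (-(t * (k+1))) := by
            rw [← Real.rpow_natCast (2⁻¹:ℝ) (k+1),
              ← Real.rpow_neg_one (2:ℝ), ← Real.rpow_mul (by norm_num),
              ← Real.rpow_mul (by norm_num)]
            congr 1
            push_cast
            ring
          have h2 : ((2:ℝ) ^ (t-1)) ^ k = 2 ^ ((t-1) * k) := by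
            rw [← Real.rpow_natCast ((2:ℝ) ^ (t-1)) k, ← Real.rpow_mul (by norm_num)]
          have h3 : ((2⁻¹:ℝ)) ^ k = 2 ^ (-(k:ℝ)) := by
            rw [← Real.rpow_natCast (2⁻¹:ℝ) k, ← Real.rpow_neg_one (2:ℝ),
              ← Real.rpow_mul (by norm_num)]
            congr 1
            push_cast
            ring
          rw [h1, h2, h3]
          rw [Real.rpow_sub hαpos, Real.rpow_one]
          rw [show κr ^ t / (α ^ t * 2 ^ (-(t * ((k:ℝ)+1)))) = κr ^ t / α ^ t * (2:ℝ) ^ (t * ((k:ℝ)+1)) by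
            rw [Real.rpow_neg (by norm_num : (0:ℝ) ≤ 2)]
            field_simp]
          rw [show t * ((k:ℝ)+1) = t + t * k by ring, Real.rpow_add (by norm_num : (0:ℝ) < 2),
            show (t-1) * (k:ℝ) = t * k + (-(k:ℝ)) by ring,
            Real.rpow_add (by norm_num : (0:ℝ) < 2)]
          have hαt : (0:ℝ) < α ^ t := Real.rpow_pos_of_pos hαpos t
          field_simp
      _ = ENNReal.ofReal (α ^ (1-t) * κr ^ t * 2 ^ t)
            * (1 - ENNReal.ofReal ((2:ℝ) ^ (t-1)))⁻¹ := by
          rw [ENNReal.tsum_mul_left, ENNReal.tsum_geometric]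
      _ = ENNReal.ofReal (2 * ((2:ℝ) ^ (1 - t) - 1)⁻¹ * (α ^ (1 - t) * κr ^ t)) := by
          rw [show (1:ℝ≥0∞) - ENNReal.ofReal ((2:ℝ) ^ (t-1))
              = ENNReal.ofReal (1 - (2:ℝ) ^ (t-1)) by
            rw [ENNReal.ofReal_sub 1 hq0.le, ENNReal.ofReal_one]]
          rw [← ENNReal.ofReal_inv_of_pos (by linarith), ← ENNReal.ofReal_mul (by positivity)]
          congr 1
          have e1 : (2:ℝ) ^ (t-1) = 2 ^ t / 2 := by
            rw [Real.rpow_sub (by norm_num : (0:ℝ) < 2), Real.rpow_one]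
          have e2 : (2:ℝ) ^ (1-t) = 2 / 2 ^ t := by
            rw [Real.rpow_sub (by norm_num : (0:ℝ) < 2), Real.rpow_one]
          have hp : (0:ℝ) < 2 ^ t := Real.rpow_pos_of_pos (by norm_num) t
          have hlt : (2:ℝ) ^ t < 2 := by
            calc (2:ℝ) ^ t < 2 ^ (1:ℝ) :=
                  Real.rpow_lt_rpow_of_exponent_lt one_lt_two ht1
              _ = 2 := Real.rpow_one 2
          rw [e1, e2]
          rw [show (1:ℝ) - 2 ^ t / 2 = (2 - 2 ^ t) / 2 by ring,
            show (2:ℝ) / 2 ^ t - 1 = (2 - 2 ^ t) / 2 ^ t by field_simp]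
          rw [inv_div, inv_div]
          field_simp
  -- final exponent computations
  have hexp1 : (κr / α) ^ (t/2) * δ = κr ^ (t/(2-t)) * δ ^ ((2 - 2*t)/(2-t)) := by
    have hda : 0 < κr / α := div_pos hκr hαpos
    refine log_eq_imp (mul_pos (Real.rpow_pos_of_pos hda _) hδ)
      (mul_pos (Real.rpow_pos_of_pos hκr _) (Real.rpow_pos_of_pos hδ _)) ?_
    rw [Real.log_mul (Real.rpow_pos_of_pos hda _).ne' hδ.ne',
      Real.log_mul (Real.rpow_pos_of_pos hκr _).ne' (Real.rpow_pos_of_pos hδ _).ne',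
      Real.log_rpow hda, Real.log_rpow hκr, Real.log_rpow hδ,
      Real.log_div hκr.ne' hαpos.ne', hα,
      Real.log_mul (Real.rpow_pos_of_pos hδ _).ne' (Real.rpow_pos_of_pos hκr _).ne',
      Real.log_rpow hδ, Real.log_rpow hκr]
    field_simp
    ring
  have hexp2 : α ^ (1-t) * κr ^ t = κr ^ (t/(2-t)) * δ ^ ((2 - 2*t)/(2-t)) := by
    refine log_eq_imp (mul_pos (Real.rpow_pos_of_pos hαpos _) (Real.rpow_pos_of_pos hκr _))
      (mul_pos (Real.rpow_pos_of_pos hκr _) (Real.rpow_pos_of_pos hδ _)) ?_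
    rw [Real.log_mul (Real.rpow_pos_of_pos hαpos _).ne' (Real.rpow_pos_of_pos hκr _).ne',
      Real.log_mul (Real.rpow_pos_of_pos hκr _).ne' (Real.rpow_pos_of_pos hδ _).ne',
      Real.log_rpow hαpos, Real.log_rpow hκr, Real.log_rpow hκr, Real.log_rpow hδ, hα,
      Real.log_mul (Real.rpow_pos_of_pos hδ _).ne' (Real.rpow_pos_of_pos hκr _).ne',
      Real.log_rpow hδ, Real.log_rpow hκr]
    field_simp
    ring
  -- the final chain
  have hfin : 2 * ((κr / α) ^ (t/2) * δ) + 2 * (2 * ((2:ℝ) ^ (1-t) - 1)⁻¹ * (α ^ (1-t) * κr ^ t))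
      = (2 + 4 * ((2:ℝ) ^ (1 - t) - 1)⁻¹) * κr ^ (t/(2-t)) * δ ^ ((2 - 2*t)/(2-t)) := by
    rw [hexp1, hexp2]
    ring
  calc ENNReal.ofReal ((∑' j, r j * |xplus j - x j|) + (∑' j, r j * |xplus j|)
          - ∑' j, r j * |x j|)
      = ∑' j, ENNReal.ofReal (r j * |xplus j - x j| + r j * |xplus j| - r j * |x j|) := by
        rw [hLHS]
        exact ENNReal.ofReal_tsum_of_nonneg hGnn hG
    _ ≤ ∑' j, (2 * ENNReal.ofReal
          (if r j * α / a j ^ 2 < |xplus j| then r j * |xplus j - x j| else 0)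
        + 2 * ENNReal.ofReal
          (if r j * α / a j ^ 2 < |xplus j| then 0 else r j * |xplus j|)) :=
        ENNReal.tsum_le_tsum hsplit
    _ = 2 * (∑' j, ENNReal.ofReal
          (if r j * α / a j ^ 2 < |xplus j| then r j * |xplus j - x j| else 0))
        + 2 * (∑' j, ENNReal.ofReal
          (if r j * α / a j ^ 2 < |xplus j| then 0 else r j * |xplus j|)) := by
        rw [ENNReal.tsum_add, ENNReal.tsum_mul_left, ENNReal.tsum_mul_left]
    _ ≤ 2 * (ENNReal.ofReal ((κr / α) ^ (t/2)) * D)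
        + 2 * ENNReal.ofReal (2 * ((2:ℝ) ^ (1 - t) - 1)⁻¹ * (α ^ (1 - t) * κr ^ t)) := by
        gcongr
    _ = ENNReal.ofReal (2 * ((κr / α) ^ (t/2) * δ)
        + 2 * (2 * ((2:ℝ) ^ (1-t) - 1)⁻¹ * (α ^ (1-t) * κr ^ t))) := by
        have hnn1 : 0 ≤ (κr/α) ^ (t/2) * δ :=
          mul_nonneg (Real.rpow_nonneg (div_nonneg hκr.le hαpos.le) _) hδ.le
        have hnn2 : 0 ≤ 2 * ((2:ℝ) ^ (1-t) - 1)⁻¹ * (α ^ (1-t) * κr ^ t) := by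
          have hi : 0 ≤ ((2:ℝ) ^ (1-t) - 1)⁻¹ := le_of_lt (inv_pos.mpr (by linarith))
          have hm : 0 ≤ α ^ (1-t) * κr ^ t :=
            mul_nonneg (Real.rpow_nonneg hαpos.le _) (Real.rpow_nonneg hκr.le _)
          nlinarith
        rw [hDδ, ← ENNReal.ofReal_mul (Real.rpow_nonneg (div_nonneg hκr.le hαpos.le) _)]
        rw [ENNReal.ofReal_add (by linarith : (0:ℝ) ≤ 2 * ((κr/α) ^ (t/2) * δ))
          (by linarith : (0:ℝ) ≤ 2 * (2 * ((2:ℝ) ^ (1-t) - 1)⁻¹ * (α ^ (1-t) * κr ^ t))),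
          ENNReal.ofReal_mul (by norm_num : (0:ℝ) ≤ 2),
          ENNReal.ofReal_mul (by norm_num : (0:ℝ) ≤ 2), ENNReal.ofReal_ofNat]
    _ = ENNReal.ofReal ((2 + 4 * ((2:ℝ) ^ (1 - t) - 1)⁻¹) * κr ^ (t/(2-t))
        * δ ^ ((2 - 2*t)/(2-t))) := by rw [hfin]
    _ = ENNReal.ofReal ((2 + 4 * ((2:ℝ) ^ (1 - t) - 1)⁻¹) * κr ^ (t / (2 - t)))
        * D ^ ((2 - 2 * t) / (2 - t)) := by
        rw [hDδ, ENNReal.ofReal_rpow_of_pos hδ,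
          ← ENNReal.ofReal_mul hKpos.le]
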